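/- For every integer δ ≥ 0 and every integer x ≥ 1, there exists a finite simple graph G and a vertex v of G such that k(v) − k̆_δ(v) = x − 1. -/

import Mathlib

open SimpleGraph

variable {V : Type*}

/-- The degree of `u` inside the subgraph of `G` induced on the vertex set `S`. -/
noncomputable def degIn (G : SimpleGraph V) (S : Set V) (u : V) : ℕ :=
  {w ∈ S | G.Adj u w}.ncard

/-- `v` belongs to the `k`-core of `G`: there is a vertex set containing `v` all of whose
vertices have degree at least `k` within the induced subgraph. -/
def inCore (G : SimpleGraph V) (k : ℕ) (v : V) : Prop :=
  ∃ S : Set V, v ∈ S ∧ ∀ u ∈ S, k ≤ degIn G S u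

/-- The core number of `v`: the largest `k` such that `v` belongs to the `k`-core of `G`. -/
noncomputable def coreNumber (G : SimpleGraph V) (v : V) : ℕ :=
  sSup {k | inCore G k v}

/-- Degree of a vertex. -/
noncomputable def deg (G : SimpleGraph V) (v : V) : ℕ :=
  (G.neighborSet v).ncard

/-- The `δ`-neighborhood of `v`: all vertices at shortest-path distance at most `δ` from `v`. -/
def ball (G : SimpleGraph V) (v : V) (δ : ℕ) : Set V :=
  {u | G.Reachable v u ∧ G.dist v u ≤ δ}

/-- The induced estimator `k̆_δ(v)`: the core number of `v` in `G[N_δ(v)]`. -/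
noncomputable def kBreve (G : SimpleGraph V) (v : V) (δ : ℕ) : ℕ :=
  coreNumber (G.induce (_root_.ball G v δ)) ⟨v, Reachable.refl v, by rw [SimpleGraph.dist_self]; exact Nat.zero_le _⟩

/-- Neighborhood of `v` as a `Finset`. -/
noncomputable def nbhd (G : SimpleGraph V) [Finite V] (v : V) : Finset V :=
  (G.neighborSet v).toFinite.toFinset

/-- The propagating estimator `k̂_δ(v)`: `k̂_0(v) = d(v)`, and `k̂_δ(v)` is the max over
`1 ≤ i ≤ d(v)` of `min (k̂_{δ-1}(u_i)) (d(v) - i + 1)`, where `u_1, …, u_{d(v)}` are the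
neighbors of `v` listed with `k̂_{δ-1}`-values nondecreasing.  In the formalization the
sorted list `l` of the neighbors' `k̂_{δ-1}`-values is indexed from `0`, so entry `i` of `l`
is `k̂_{δ-1}(u_{i+1})` and `d(v) - i = d(v) - (i+1) + 1`. -/
noncomputable def kHat (G : SimpleGraph V) [Finite V] : ℕ → V → ℕ
  | 0, v => deg G v
  | δ + 1, v =>
    let l : List ℕ := Multiset.sort ((nbhd G v).val.map (kHat G δ)) (· ≤ ·)
    (Finset.range l.length).sup fun i => min (l.getD i 0) (deg G v - i)


section Generic

variable {α β : Type*}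

lemma inCore_zero (G : SimpleGraph α) (v : α) : inCore G 0 v :=
  ⟨{v}, rfl, fun _ _ => Nat.zero_le _⟩

lemma inCore_le_deg [Finite α] {G : SimpleGraph α} {k : ℕ} {v : α} (h : inCore G k v) :
    k ≤ deg G v := by
  obtain ⟨S, hv, hS⟩ := h
  refine (hS v hv).trans ?_
  exact Set.ncard_le_ncard (fun w hw => hw.2) (Set.toFinite _)

lemma coreNumber_eq_of [Finite α] {G : SimpleGraph α} {v : α} {x : ℕ}
    (h1 : inCore G x v) (h2 : ∀ k, inCore G k v → k ≤ x) : coreNumber G v = x := by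
  refine le_antisymm (csSup_le ⟨0, inCore_zero G v⟩ h2) ?_
  exact le_csSup ⟨deg G v, fun k hk => inCore_le_deg hk⟩ h1

lemma le_ncard_of_inj [Finite β] {s : Set β} {m : ℕ} (f : Fin m → β)
    (hinj : Function.Injective f) (hmem : ∀ i, f i ∈ s) : m ≤ s.ncard := by
  rw [← Nat.card_coe_set_eq]
  have h2 : Function.Injective (fun i : Fin m => (⟨f i, hmem i⟩ : s)) := by
    intro a b h
    exact hinj (congrArg Subtype.val h)
  simpa using Nat.card_le_card_of_injective _ h2

variable {G : SimpleGraph α} {H : SimpleGraph β}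

lemma degIn_image (φ : G ≃g H) (S : Set α) (u : α) :
    degIn H ((φ : α → β) '' S) (φ u) = degIn G S u := by
  have h : {w ∈ (φ : α → β) '' S | H.Adj (φ u) w} = (φ : α → β) '' {w ∈ S | G.Adj u w} := by
    ext w
    constructor
    · rintro ⟨⟨a, ha, rfl⟩, hadj⟩
      exact ⟨a, ⟨ha, φ.map_adj_iff.mp hadj⟩, rfl⟩
    · rintro ⟨a, ⟨ha, hadj⟩, rfl⟩
      exact ⟨⟨a, ha, rfl⟩, φ.map_adj_iff.mpr hadj⟩
  rw [degIn, h, Set.ncard_image_of_injective _ φ.injective]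
  rfl

lemma inCore_image (φ : G ≃g H) {k : ℕ} {v : α} (h : inCore G k v) : inCore H k (φ v) := by
  obtain ⟨S, hv, hS⟩ := h
  refine ⟨(φ : α → β) '' S, ⟨v, hv, rfl⟩, ?_⟩
  rintro u ⟨a, ha, rfl⟩
  rw [degIn_image φ]
  exact hS a ha

lemma inCore_iff_image (φ : G ≃g H) {k : ℕ} {v : α} : inCore H k (φ v) ↔ inCore G k v := by
  refine ⟨fun h => ?_, inCore_image φ⟩
  have := inCore_image φ.symm h
  simpa using this

lemma coreNumber_image (φ : G ≃g H) (v : α) : coreNumber H (φ v) = coreNumber G v := by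
  unfold coreNumber
  congr 1
  ext k
  exact inCore_iff_image φ

lemma reachable_image (φ : G ≃g H) {u v : α} (h : G.Reachable u v) :
    H.Reachable (φ u) (φ v) := by
  obtain ⟨W⟩ := h
  exact ⟨W.map φ.toHom⟩

lemma dist_le_image (φ : G ≃g H) (u v : α) : H.dist (φ u) (φ v) ≤ G.dist u v := by
  by_cases h : G.Reachable u v
  · obtain ⟨W, hW⟩ := h.exists_walk_length_eq_dist
    calc H.dist (φ u) (φ v) ≤ (W.map φ.toHom).length := SimpleGraph.dist_le _
      _ = G.dist u v := by rw [SimpleGraph.Walk.length_map, hW]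
  · have h2 : ¬ H.Reachable (φ u) (φ v) := fun hr => h (by simpa using reachable_image φ.symm hr)
    simp [SimpleGraph.dist_eq_zero_of_not_reachable h2]

lemma dist_image (φ : G ≃g H) (u v : α) : H.dist (φ u) (φ v) = G.dist u v := by
  refine le_antisymm (dist_le_image φ u v) ?_
  have := dist_le_image φ.symm (φ u) (φ v)
  simpa using this

lemma mem_ball_image (φ : G ≃g H) (v : α) (δ : ℕ) (a : α) :
    a ∈ _root_.ball G v δ ↔ φ a ∈ _root_.ball H (φ v) δ := by
  unfold _root_.ball
  simp only [Set.mem_setOf_eq, dist_image φ]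
  constructor
  · rintro ⟨hr, hd⟩
    exact ⟨reachable_image φ hr, hd⟩
  · rintro ⟨hr, hd⟩
    refine ⟨?_, hd⟩
    have := reachable_image φ.symm hr
    simpa using this

noncomputable def ballIso (φ : G ≃g H) (v : α) (δ : ℕ) :
    (G.induce (_root_.ball G v δ)) ≃g (H.induce (_root_.ball H (φ v) δ)) where
  toEquiv := Equiv.subtypeEquiv φ.toEquiv (mem_ball_image φ v δ)
  map_rel_iff' := by
    intro a b
    simp [Equiv.subtypeEquiv, comap_adj, φ.map_adj_iff]

lemma kBreve_image [Finite α] [Finite β] (φ : G ≃g H) (v : α) (δ : ℕ) :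
    kBreve H (φ v) δ = kBreve G v δ := by
  unfold kBreve
  have h : (⟨φ v, Reachable.refl _, by rw [SimpleGraph.dist_self]; exact Nat.zero_le _⟩ :
      (_root_.ball H (φ v) δ)) = (ballIso φ v δ) ⟨v, Reachable.refl v, by
        rw [SimpleGraph.dist_self]; exact Nat.zero_le _⟩ := by
    apply Subtype.ext
    rfl
  rw [h, coreNumber_image (ballIso φ v δ)]

end Generic

section Tree
variable {x d : ℕ}

def TV (x d : ℕ) : Type := {l : List (Fin x) // l.length ≤ d + 3}

instance : Finite (TV x d) := (List.finite_length_le (Fin x) (d+3)).to_subtype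

def TG (x d : ℕ) : SimpleGraph (TV x d) :=
  SimpleGraph.fromRel (fun u w => (∃ a, w.val = a :: u.val) ∨
    (u.val.length = d + 3 ∧ w.val.length = d + 3 ∧ u.val.tail = w.val.tail))

def troot (x d : ℕ) : TV x d := ⟨[], by simp⟩

lemma tg_adj {u w : TV x d} (h : (TG x d).Adj u w) :
    (∃ a, w.val = a :: u.val) ∨ (∃ a, u.val = a :: w.val) ∨
      (u.val.length = d + 3 ∧ w.val.length = d + 3 ∧ u.val.tail = w.val.tail) := by
  rw [TG, SimpleGraph.fromRel_adj] at h
  obtain ⟨hne, h | h⟩ := h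
  · rcases h with h | h
    · exact Or.inl h
    · exact Or.inr (Or.inr h)
  · rcases h with h | h
    · exact Or.inr (Or.inl h)
    · exact Or.inr (Or.inr ⟨h.2.1, h.1, h.2.2.symm⟩)

lemma tg_adj_cons (u w : TV x d) (a : Fin x) (hw : w.val = a :: u.val) :
    (TG x d).Adj u w := by
  rw [TG, SimpleGraph.fromRel_adj]
  refine ⟨?_, Or.inl (Or.inl ⟨a, hw⟩)⟩
  intro he
  rw [he] at hw
  have := congrArg List.length hw
  simp at this

lemma tg_adj_clique (u w : TV x d) (hu : u.val.length = d+3) (hw : w.val.length = d+3)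
    (ht : u.val.tail = w.val.tail) (hne : u ≠ w) : (TG x d).Adj u w := by
  rw [TG, SimpleGraph.fromRel_adj]
  exact ⟨hne, Or.inl (Or.inr ⟨hu, hw, ht⟩)⟩

lemma tg_adj_length {u w : TV x d} (h : (TG x d).Adj u w) :
    w.val.length ≤ u.val.length + 1 := by
  rcases tg_adj h with ⟨a, ha⟩ | ⟨a, ha⟩ | ⟨h1, h2, _⟩
  · rw [ha]; simp
  · have := congrArg List.length ha
    simp at this
    omega
  · omega

lemma tg_walk_len {u w : TV x d} (W : (TG x d).Walk u w) :
    w.val.length ≤ u.val.length + W.length := by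
  induction W with
  | nil => simp
  | cons h p ih =>
    have h1 := tg_adj_length h
    rw [SimpleGraph.Walk.length_cons]
    omega

lemma tg_walk_to : ∀ (l : List (Fin x)) (h : l.length ≤ d + 3),
    ∃ W : (TG x d).Walk (troot x d) ⟨l, h⟩, W.length = l.length := by
  intro l
  induction l with
  | nil => intro h; exact ⟨SimpleGraph.Walk.nil, rfl⟩
  | cons a t ih =>
    intro h
    have ht : t.length ≤ d + 3 := by simp at h; omega
    obtain ⟨W, hW⟩ := ih ht
    have hadj : (TG x d).Adj ⟨t, ht⟩ ⟨a :: t, h⟩ := tg_adj_cons _ _ a rfl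
    exact ⟨W.concat hadj, by have h1 := SimpleGraph.Walk.length_concat W hadj; simp only [List.length_cons]; omega⟩

lemma tg_mem_ball (u : TV x d) :
    u ∈ _root_.ball (TG x d) (troot x d) (d+1) ↔ u.val.length ≤ d + 1 := by
  constructor
  · rintro ⟨hr, hd⟩
    obtain ⟨W, hW⟩ := hr.exists_walk_length_eq_dist
    have h1 := tg_walk_len W
    have h0 : (troot x d).val.length = 0 := rfl
    omega
  · intro hlen
    obtain ⟨l, hl⟩ := u
    obtain ⟨W, hW⟩ := tg_walk_to l hl
    have hle := SimpleGraph.dist_le W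
    have hW2 : W.length ≤ d + 1 := by rw [hW]; exact hlen
    exact ⟨⟨W⟩, hle.trans hW2⟩

lemma tg_deg_root_le : deg (TG x d) (troot x d) ≤ x := by
  have hsub : (TG x d).neighborSet (troot x d) ⊆
      (fun a : Fin x => (⟨[a], by simp⟩ : TV x d)) '' Set.univ := by
    intro w hw
    rcases tg_adj hw with ⟨a, ha⟩ | ⟨a, ha⟩ | ⟨h1, _, _⟩
    · exact ⟨a, trivial, Subtype.ext ha.symm⟩
    · exact absurd ha (by simp [troot])
    · simp [troot] at h1
  calc deg (TG x d) (troot x d) ≤ _ := Set.ncard_le_ncard hsub (Set.toFinite _)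
    _ ≤ (Set.univ : Set (Fin x)).ncard := Set.ncard_image_le (Set.toFinite _)
    _ = x := by rw [Set.ncard_univ]; simp

lemma tg_min_deg (u : TV x d) : x ≤ degIn (TG x d) Set.univ u := by
  by_cases hlen : u.val.length ≤ d + 2
  · refine le_ncard_of_inj (fun a => ⟨a :: u.val, by simp; omega⟩) ?_ ?_
    · intro a b hab
      have h1 := congrArg Subtype.val hab
      simp at h1
      exact h1
    · intro a
      exact ⟨trivial, tg_adj_cons _ _ a rfl⟩
  · have hlen3 : u.val.length = d + 3 := by have := u.2; omega
    obtain ⟨h, t, hu⟩ : ∃ h t, u.val = h :: t := by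
      cases hval : u.val with
      | nil => rw [hval] at hlen3; simp at hlen3
      | cons h t => exact ⟨h, t, rfl⟩
    have ht : t.length = d + 2 := by
      rw [hu] at hlen3
      simpa using hlen3
    refine le_ncard_of_inj
      (fun b => if hb : b = h then ⟨t, by omega⟩ else ⟨b :: t, by simp; omega⟩) ?_ ?_
    · intro a b hab
      dsimp only at hab
      by_cases ha : a = h <;> by_cases hb2 : b = h
      · rw [ha, hb2]
      · erw [dif_pos ha, dif_neg hb2] at hab
        have h2 := congrArg (fun z : TV x d => z.val.length) hab
        simp at h2
      · erw [dif_neg ha, dif_pos hb2] at hab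
        have h2 := congrArg (fun z : TV x d => z.val.length) hab
        simp at h2
      · erw [dif_neg ha, dif_neg hb2] at hab
        have h2 := congrArg Subtype.val hab
        simp only [List.cons.injEq] at h2
        exact h2.1
    · intro b
      refine ⟨trivial, ?_⟩
      by_cases hb : b = h
      · erw [dif_pos hb]
        erw [TG, SimpleGraph.fromRel_adj]
        refine ⟨?_, Or.inr (Or.inl ⟨h, by rw [hu]⟩)⟩
        intro he
        have := congrArg (fun z : TV x d => z.val.length) he
        simp [hu, ht] at this
      · erw [dif_neg hb]
        apply tg_adj_clique
        · exact hlen3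
        · simpa using ht
        · rw [hu]; rfl
        · intro he
          have := congrArg Subtype.val he
          rw [hu] at this
          simp only [List.cons.injEq] at this
          exact hb this.1.symm

lemma tg_core : coreNumber (TG x d) (troot x d) = x := by
  apply coreNumber_eq_of
  · exact ⟨Set.univ, trivial, fun u _ => tg_min_deg u⟩
  · intro k hk
    exact (inCore_le_deg hk).trans tg_deg_root_le

lemma tg_kbreve (hx : 1 ≤ x) : kBreve (TG x d) (troot x d) (d+1) = 1 := by
  unfold kBreve
  apply coreNumber_eq_of
  · set B := _root_.ball (TG x d) (troot x d) (d+1) with hB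
    set r : ↥B := ⟨troot x d, Reachable.refl _, by rw [SimpleGraph.dist_self]; exact Nat.zero_le _⟩ with hr
    have hcmem : (⟨[⟨0, hx⟩], by simp⟩ : TV x d) ∈ B := (tg_mem_ball _).mpr (by simp)
    set c : ↥B := ⟨⟨[⟨0, hx⟩], by simp⟩, hcmem⟩ with hc
    have hrc : ((TG x d).induce B).Adj r c := tg_adj_cons _ _ ⟨0, hx⟩ rfl
    have hcr : ((TG x d).induce B).Adj c r := hrc.symm
    refine ⟨{r, c}, Or.inl rfl, ?_⟩
    intro u hu
    have hpos : ∀ w ∈ ({r, c} : Set ↥B), ((TG x d).induce B).Adj u w →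
        1 ≤ degIn ((TG x d).induce B) {r, c} u := by
      intro w hw hadj
      rw [degIn]
      have hne : ({z ∈ ({r, c} : Set ↥B) | ((TG x d).induce B).Adj u z}).Nonempty :=
        ⟨w, hw, hadj⟩
      have := (Set.ncard_pos (Set.toFinite _)).mpr hne
      omega
    rcases hu with rfl | rfl
    · exact hpos c (Or.inr rfl) hrc
    · exact hpos r (Or.inl rfl) hcr
  · intro k hk
    obtain ⟨S, hvS, hS⟩ := hk
    obtain ⟨u, huS, hmax⟩ := Set.Finite.exists_maximalFor
      (fun z : ↥(_root_.ball (TG x d) (troot x d) (d+1)) => z.val.val.length) S (Set.toFinite S) ⟨_, hvS⟩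
    refine (hS u huS).trans ?_
    rw [degIn, Set.ncard_le_one (Set.toFinite _)]
    have key : ∀ w, ((TG x d).induce (_root_.ball (TG x d) (troot x d) (d+1))).Adj u w → w ∈ S →
        w.val.val = u.val.val.tail := by
      intro w hadj hwS
      have hadj' : (TG x d).Adj u.val w.val := hadj
      rcases tg_adj hadj' with ⟨a, ha⟩ | ⟨a, ha⟩ | ⟨h1, _, _⟩
      · have hlw : w.val.val.length = u.val.val.length + 1 := by rw [ha]; simp
        have := hmax hwS (by beta_reduce; omega)
        beta_reduce at this; omega
      · rw [ha]; rfl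
      · have := (tg_mem_ball u.val).mp u.2
        omega
    rintro w1 ⟨hw1S, hw1a⟩ w2 ⟨hw2S, hw2a⟩
    apply Subtype.ext
    apply Subtype.ext
    rw [key w1 hw1a hw1S, key w2 hw2a hw2S]

end Tree


section CaseZero

lemma case_zero (x : ℕ) (hx : 1 ≤ x) :
    ∃ (n : ℕ) (G : SimpleGraph (Fin n)) (v : Fin n),
      coreNumber G v - kBreve G v 0 = x - 1 := by
  refine ⟨x, ⊤, ⟨0, hx⟩, ?_⟩
  set v : Fin x := ⟨0, hx⟩
  have hcompl : ∀ u : Fin x, ({u}ᶜ : Set (Fin x)).ncard = x - 1 := by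
    intro u
    rw [Set.ncard_eq_toFinset_card', Set.toFinset_compl, Set.toFinset_singleton,
      Finset.card_compl]
    simp
  have hcore : coreNumber (⊤ : SimpleGraph (Fin x)) v = x - 1 := by
    apply coreNumber_eq_of
    · refine ⟨Set.univ, trivial, fun u _ => ?_⟩
      have h1 : {w ∈ Set.univ | (⊤ : SimpleGraph (Fin x)).Adj u w} = ({u}ᶜ : Set (Fin x)) := by
        ext w
        simp [eq_comm]
      rw [degIn, h1, hcompl]
    · intro k hk
      refine (inCore_le_deg hk).trans ?_
      have h2 : (⊤ : SimpleGraph (Fin x)).neighborSet v = ({v}ᶜ : Set (Fin x)) := by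
        ext w
        simp [SimpleGraph.neighborSet, eq_comm]
      rw [deg, h2, hcompl]
  have hball : ∀ u : Fin x, u ∈ _root_.ball (⊤ : SimpleGraph (Fin x)) v 0 → u = v := by
    intro u hu
    obtain ⟨hr, hd⟩ := hu
    have : (⊤ : SimpleGraph (Fin x)).dist v u = 0 := Nat.le_zero.mp hd
    exact (hr.dist_eq_zero_iff.mp this).symm
  have hkb : kBreve (⊤ : SimpleGraph (Fin x)) v 0 = 0 := by
    unfold kBreve
    refine coreNumber_eq_of (inCore_zero _ _) (fun k hk => ?_)
    obtain ⟨S, hvS, hS⟩ := hk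
    refine (hS _ hvS).trans ?_
    have hempty : {w ∈ S | ((⊤ : SimpleGraph (Fin x)).induce (_root_.ball ⊤ v 0)).Adj
        ⟨v, Reachable.refl v, by simp⟩ w} = ∅ := by
      ext w
      simp only [Set.mem_setOf_eq, Set.mem_empty_iff_false, iff_false, not_and]
      intro _
      intro hadj
      have hadj' : (⊤ : SimpleGraph (Fin x)).Adj v w.val := hadj
      exact hadj'.ne (hball w.val w.2).symm
    rw [degIn, hempty]
    simp
  rw [hcore, hkb]
  omega

end CaseZero

/-- for every `δ ≥ 0` and every `x ≥ 1` there is a finite simple graph and a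
vertex `v` with `k(v) - k̆_δ(v) = x - 1`. -/
theorem stmt15 (δ x : ℕ) (hx : 1 ≤ x) :
    ∃ (n : ℕ) (G : SimpleGraph (Fin n)) (v : Fin n),
      coreNumber G v - kBreve G v δ = x - 1 := by
  cases δ with
  | zero => exact case_zero x hx
  | succ d =>
    obtain ⟨n, ⟨e⟩⟩ := Finite.exists_equiv_fin (TV x d)
    have φ : (TG x d) ≃g (SimpleGraph.comap (⇑e.symm) (TG x d)) :=
      { toEquiv := e, map_rel_iff' := by intro a b; simp [SimpleGraph.comap_adj] }
    refine ⟨n, SimpleGraph.comap (⇑e.symm) (TG x d), φ (troot x d), ?_⟩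
    rw [coreNumber_image φ, kBreve_image φ, tg_core, tg_kbreve hx]
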